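/- Let F have characteristic 2 and b, c ∈ F[x] with deg c = 2 deg b, b ≠ 0, and suppose the equation b₀²t² + b₀²t + c₀ = 0 (where b₀, c₀ are the leading coefficients of b and c) has no solution t in F. Then ω² + bω + c = 0 has no solution ω in the Laurent series field F((1/x)). -/

import Mathlib

open Polynomial

/-- The image of a polynomial in F((1/x)): evaluate at x = X⁻¹, where the
variable x corresponds to the Laurent series `single (-1) 1` of degree 1. -/
noncomputable def polyToLaurentInv (F : Type) [Field F] (p : Polynomial F) :
    LaurentSeries F :=
  Polynomial.aeval (HahnSeries.single (-1 : ℤ) (1 : F)) p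

lemma ptl_coeff (F : Type) [Field F] (p : Polynomial F) (m : ℤ) :
    (polyToLaurentInv F p).coeff m =
      ∑ i ∈ Finset.range (p.natDegree + 1),
        (if m = -(i : ℤ) then p.coeff i else 0) := by
  rw [polyToLaurentInv, Polynomial.aeval_eq_sum_range,
    ← HahnSeries.coeff.addMonoidHom_apply, map_sum]
  refine Finset.sum_congr rfl fun i _ => ?_
  rw [HahnSeries.coeff.addMonoidHom_apply, HahnSeries.single_pow, one_pow]
  rw [Algebra.smul_def, HahnSeries.algebraMap_apply', ← PowerSeries.C_eq_algebraMap,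
    HahnSeries.ofPowerSeries_C, HahnSeries.C_apply, HahnSeries.single_mul_single, zero_add,
    mul_one, HahnSeries.coeff_single]
  norm_num

lemma ptl_coeff_nat (F : Type) [Field F] (p : Polynomial F) (k : ℕ) :
    (polyToLaurentInv F p).coeff (-(k : ℤ)) = p.coeff k := by
  rw [ptl_coeff]
  have : ∀ i ∈ Finset.range (p.natDegree + 1),
      (if -(k : ℤ) = -(i : ℤ) then p.coeff i else 0) = if i = k then p.coeff i else 0 := by
    intro i _
    congr 1
    simp [neg_inj, Int.natCast_inj, eq_comm]
  rw [Finset.sum_congr rfl this, Finset.sum_ite_eq' (Finset.range (p.natDegree + 1))]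
  split
  · rfl
  · next h =>
    rw [Finset.mem_range, Nat.lt_succ_iff, not_le] at h
    exact (Polynomial.coeff_eq_zero_of_natDegree_lt h).symm

lemma ptl_coeff_zero_of_lt (F : Type) [Field F] (p : Polynomial F) (m : ℤ)
    (hm : m < -(p.natDegree : ℤ)) : (polyToLaurentInv F p).coeff m = 0 := by
  rw [ptl_coeff]
  refine Finset.sum_eq_zero fun i hi => ?_
  rw [Finset.mem_range, Nat.lt_succ_iff] at hi
  have : m ≠ -(i : ℤ) := by
    intro h
    subst h
    omega
  simp [this]

lemma ptl_ne_zero (F : Type) [Field F] (p : Polynomial F) (hp : p ≠ 0) :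
    polyToLaurentInv F p ≠ 0 := by
  have h := ptl_coeff_nat F p p.natDegree
  rw [← Polynomial.leadingCoeff] at h
  have : (polyToLaurentInv F p).coeff (-(p.natDegree : ℤ)) ≠ 0 := by
    rw [h]; exact Polynomial.leadingCoeff_ne_zero.mpr hp
  exact HahnSeries.ne_zero_of_coeff_ne_zero this

lemma ptl_order (F : Type) [Field F] (p : Polynomial F) (hp : p ≠ 0) :
    (polyToLaurentInv F p).order = -(p.natDegree : ℤ) := by
  have h := ptl_coeff_nat F p p.natDegree
  rw [← Polynomial.leadingCoeff] at h
  have hne : (polyToLaurentInv F p).coeff (-(p.natDegree : ℤ)) ≠ 0 := by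
    rw [h]; exact Polynomial.leadingCoeff_ne_zero.mpr hp
  refine le_antisymm (HahnSeries.order_le_of_coeff_ne_zero hne) ?_
  by_contra hlt
  push_neg at hlt
  exact (HahnSeries.coeff_order_eq_zero.not.mpr (ptl_ne_zero F p hp))
    (ptl_coeff_zero_of_lt F p _ hlt)

lemma ptl_leadingCoeff (F : Type) [Field F] (p : Polynomial F) (hp : p ≠ 0) :
    (polyToLaurentInv F p).coeff (polyToLaurentInv F p).order = p.leadingCoeff := by
  rw [ptl_order F p hp, Polynomial.leadingCoeff]
  exact ptl_coeff_nat F p p.natDegree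

/-- char F = 2, deg c = 2 deg b, b ≠ 0 and b₀²t² + b₀²t + c₀ = 0 has no root
in F: then ω² + bω + c = 0 has no solution in F((1/x)). -/
theorem no_laurent_root_of_unsolvable_leading_equation
    (F : Type) [Field F] [CharP F 2] (b c : Polynomial F)
    (hb : b ≠ 0) (hc : c ≠ 0) (hdeg : c.natDegree = 2 * b.natDegree)
    (hnoroot : ∀ t : F,
      b.leadingCoeff ^ 2 * t ^ 2 + b.leadingCoeff ^ 2 * t + c.leadingCoeff ≠ 0) :
    ¬ ∃ ω : LaurentSeries F,
        ω ^ 2 + polyToLaurentInv F b * ω + polyToLaurentInv F c = 0 := by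
  rintro ⟨ω, hω⟩
  set B := polyToLaurentInv F b with hBdef
  set C := polyToLaurentInv F c with hCdef
  set n : ℤ := (b.natDegree : ℤ) with hn
  have hB : B ≠ 0 := ptl_ne_zero F b hb
  have hC : C ≠ 0 := ptl_ne_zero F c hc
  have hOB : B.order = -n := ptl_order F b hb
  have hOC : C.order = -(2 * n) := by
    rw [ptl_order F c hc, hdeg]; push_cast; ring
  have hb0 : b.leadingCoeff ≠ 0 := Polynomial.leadingCoeff_ne_zero.mpr hb
  have hc0 : c.leadingCoeff ≠ 0 := Polynomial.leadingCoeff_ne_zero.mpr hc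
  have hω0 : ω ≠ 0 := by
    rintro rfl
    rw [zero_pow two_ne_zero, mul_zero, zero_add, zero_add] at hω
    exact hC hω
  set m : ℤ := ω.order with hm
  have hωsq : ω ^ 2 = ω * ω := sq ω
  have hcoeff : ∀ g : ℤ, (ω * ω).coeff g + (B * ω).coeff g + C.coeff g = 0 := by
    intro g
    have := congrArg (fun z : LaurentSeries F => z.coeff g) hω
    simpa [hωsq, HahnSeries.coeff_add] using this
  have hords : (ω * ω).order = m + m := HahnSeries.order_mul hω0 hω0
  have hordB : (B * ω).order = -n + m := by rw [HahnSeries.order_mul hB hω0, hOB]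
  have hu : ω.coeff m ≠ 0 := HahnSeries.coeff_order_eq_zero.not.mpr hω0
  have hlc : ω.leadingCoeff = ω.coeff m := by
    rw [HahnSeries.leadingCoeff_eq]
  have hBlc : B.leadingCoeff = b.leadingCoeff := by
    rw [show B.leadingCoeff = B.coeff B.order from
      HahnSeries.leadingCoeff_eq]
    exact ptl_leadingCoeff F b hb
  rcases lt_trichotomy m (-n) with hlt | heq | hgt
  · -- order of ω too small
    have h1 : (ω * ω).coeff (m + m) = ω.coeff m * ω.coeff m := by
      have := HahnSeries.coeff_mul_order_add_order ω ω
      rwa [← hm, hlc] at this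
    have h2 : (B * ω).coeff (m + m) = 0 :=
      HahnSeries.coeff_eq_zero_of_lt_order (by rw [hordB]; omega)
    have h3 : C.coeff (m + m) = 0 :=
      HahnSeries.coeff_eq_zero_of_lt_order (by rw [hOC]; omega)
    have := hcoeff (m + m)
    rw [h1, h2, h3, add_zero, add_zero] at this
    exact hu (mul_self_eq_zero.mp this)
  · -- order of ω equals -n : leading coefficients give the unsolvable equation
    set u := ω.coeff m with hudef
    have h1 : (ω * ω).coeff (m + m) = u * u := by
      have := HahnSeries.coeff_mul_order_add_order ω ω
      rwa [← hm, hlc] at this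
    have h2 : (B * ω).coeff (m + m) = b.leadingCoeff * u := by
      have := HahnSeries.coeff_mul_order_add_order B ω
      rw [hOB, ← hm, hBlc, hlc, heq] at this
      rwa [heq]
    have h3 : C.coeff (m + m) = c.leadingCoeff := by
      have : m + m = C.order := by rw [hOC, heq]; ring
      rw [this]
      exact ptl_leadingCoeff F c hc
    have key : u * u + b.leadingCoeff * u + c.leadingCoeff = 0 := by
      rw [← h1, ← h2, ← h3]; exact hcoeff (m + m)
    refine hnoroot (u / b.leadingCoeff) ?_
    have e1 : b.leadingCoeff ^ 2 * (u / b.leadingCoeff) ^ 2 = u * u := by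
      field_simp
    have e2 : b.leadingCoeff ^ 2 * (u / b.leadingCoeff) = b.leadingCoeff * u := by
      field_simp
    rw [e1, e2, key]
  · -- order of ω too big : coefficient at -2n gives c₀ = 0
    have h1 : (ω * ω).coeff (-(2 * n)) = 0 :=
      HahnSeries.coeff_eq_zero_of_lt_order (by rw [hords]; omega)
    have h2 : (B * ω).coeff (-(2 * n)) = 0 :=
      HahnSeries.coeff_eq_zero_of_lt_order (by rw [hordB]; omega)
    have h3 : C.coeff (-(2 * n)) = c.leadingCoeff := by
      rw [← hOC]
      exact ptl_leadingCoeff F c hc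
    have := hcoeff (-(2 * n))
    rw [h1, h2, h3, zero_add, zero_add] at this
    exact hc0 this
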